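/- Let $2 \geq \alpha_1 \geq \alpha_2 > 0$ with $\gamma := 2 - 1/\alpha_1 - 1/\alpha_2 > 0$, $\alpha_2 < 2$, and $\alpha_1 > 1$. Then for all integers $k, n \geq 3$, the integral $\int_1^{n-1}\int_1^{k-1} \frac{dy_1\, dy_2}{\left((k-y_1)^{\alpha_1} + (n-y_2)^{\alpha_2}\right)\left(y_1^{\alpha_1} + y_2^{\alpha_2}\right)}$ is at most $C\left(\frac{1}{k^{\alpha_1} + n^{\alpha_2}}\right)^{\gamma}$, where $C$ depends only on $\alpha_1, \alpha_2$. -/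

import Mathlib

open Set MeasureTheory Real

namespace Stmt16Aux

lemma lint_refl (a : ℝ) (f : ℝ → ENNReal) :
    ∫⁻ x in Icc (1:ℝ) (a-1), f (a - x) = ∫⁻ x in Icc (1:ℝ) (a-1), f x := by
  have hmp : MeasurePreserving (fun x : ℝ => a - x) volume volume :=
    ⟨measurable_const.sub measurable_id, Measure.map_sub_left_eq_self volume a⟩
  have hemb : MeasurableEmbedding (fun x : ℝ => a - x) :=
    (MeasurableEquiv.subLeft a).measurableEmbedding
  have h := hmp.setLIntegral_comp_preimage_emb hemb f (Icc 1 (a-1))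
  rwa [preimage_const_sub_Icc, sub_sub_cancel] at h

lemma oneD (α c b : ℝ) (hα : 1 < α) (hc : 0 < c) :
    ∫⁻ y in Icc (1:ℝ) b, ENNReal.ofReal (1/(y^α + c)) ≤
      ENNReal.ofReal ((1 + 1/(α-1)) * c^(1/α - 1)) := by
  have hα0 : 0 < α := by linarith
  have hα1 : 0 < α - 1 := by linarith
  have hαne : α ≠ 0 := ne_of_gt hα0
  have hα1ne : α - 1 ≠ 0 := ne_of_gt hα1
  set T := c ^ (1/α) with hTdef
  have hT0 : 0 < T := Real.rpow_pos_of_pos hc _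
  have hTpow : T ^ (1 - α) = c ^ (1/α - 1) := by
    rw [hTdef, ← Real.rpow_mul hc.le]
    congr 1
    field_simp
  have hsub : Icc (1:ℝ) b ⊆ Ioc 0 T ∪ Ioi T := by
    intro x hx
    rcases le_or_gt x T with h | h
    · exact Or.inl ⟨lt_of_lt_of_le one_pos hx.1, h⟩
    · exact Or.inr h
  have h1 : ∫⁻ y in Ioc 0 T, ENNReal.ofReal (1/(y^α + c)) ≤ ENNReal.ofReal (c^(1/α-1)) := by
    calc ∫⁻ y in Ioc 0 T, ENNReal.ofReal (1/(y^α + c))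
        ≤ ∫⁻ _y in Ioc 0 T, ENNReal.ofReal (1/c) := by
          refine setLIntegral_mono' measurableSet_Ioc fun x hx => ?_
          exact ENNReal.ofReal_le_ofReal
            (one_div_le_one_div_of_le hc (le_add_of_nonneg_left (Real.rpow_nonneg hx.1.le _)))
      _ = ENNReal.ofReal (1/c) * ENNReal.ofReal T := by
          rw [setLIntegral_const, Real.volume_Ioc, sub_zero]
      _ = ENNReal.ofReal (c^(1/α-1)) := by
          rw [← ENNReal.ofReal_mul (one_div_nonneg.2 hc.le)]
          congr 1
          rw [Real.rpow_sub hc, Real.rpow_one, hTdef, div_mul_eq_mul_div, one_mul]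
  have h2 : ∫⁻ y in Ioi T, ENNReal.ofReal (1/(y^α + c)) ≤
      ENNReal.ofReal (c^(1/α-1)/(α-1)) := by
    have hint : IntegrableOn (fun y : ℝ => y ^ (-α)) (Ioi T) :=
      integrableOn_Ioi_rpow_of_lt (by linarith) hT0
    calc ∫⁻ y in Ioi T, ENNReal.ofReal (1/(y^α + c))
        ≤ ∫⁻ y in Ioi T, ENNReal.ofReal (y ^ (-α)) := by
          refine setLIntegral_mono' measurableSet_Ioi fun x hx => ?_
          have hx0 : 0 < x := hT0.trans hx
          refine ENNReal.ofReal_le_ofReal ?_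
          rw [Real.rpow_neg hx0.le, ← one_div]
          exact one_div_le_one_div_of_le (Real.rpow_pos_of_pos hx0 _)
            (le_add_of_nonneg_right hc.le)
      _ = ENNReal.ofReal (∫ y in Ioi T, y ^ (-α)) := by
          rw [ofReal_integral_eq_lintegral_ofReal hint
            ((ae_restrict_iff' measurableSet_Ioi).2 (ae_of_all _ fun x hx =>
              Real.rpow_nonneg (hT0.trans hx).le _))]
      _ = ENNReal.ofReal (c^(1/α-1)/(α-1)) := by
          rw [integral_Ioi_rpow_of_lt (by linarith) hT0]
          congr 1
          rw [show -α + 1 = 1 - α by ring, hTpow,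
            show (1 - α : ℝ) = -(α-1) by ring, div_neg, neg_div, neg_neg]
  calc ∫⁻ y in Icc (1:ℝ) b, ENNReal.ofReal (1/(y^α + c))
      ≤ ∫⁻ y in Ioc 0 T ∪ Ioi T, ENNReal.ofReal (1/(y^α + c)) := lintegral_mono_set hsub
    _ = (∫⁻ y in Ioc 0 T, ENNReal.ofReal (1/(y^α + c)))
        + ∫⁻ y in Ioi T, ENNReal.ofReal (1/(y^α + c)) :=
        lintegral_union measurableSet_Ioi
          (Set.disjoint_left.2 fun x hx1 hx2 => absurd hx1.2 (not_le.2 hx2))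
    _ ≤ ENNReal.ofReal (c^(1/α-1)) + ENNReal.ofReal (c^(1/α-1)/(α-1)) := add_le_add h1 h2
    _ = ENNReal.ofReal ((1 + 1/(α-1)) * c^(1/α - 1)) := by
        rw [← ENNReal.ofReal_add (Real.rpow_nonneg hc.le _)
          (div_nonneg (Real.rpow_nonneg hc.le _) hα1.le)]
        congr 1
        field_simp

lemma powInt (β b : ℝ) (hβ : -1 < β) (hb : 1 ≤ b) :
    ∫⁻ y in Icc (1:ℝ) b, ENNReal.ofReal (y^β) ≤ ENNReal.ofReal (b^(β+1)/(β+1)) := by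
  have hb0 : 0 < b := lt_of_lt_of_le one_pos hb
  have hsub : Icc (1:ℝ) b ⊆ Ioc 0 b := fun x hx => ⟨lt_of_lt_of_le one_pos hx.1, hx.2⟩
  have hint : IntegrableOn (fun y : ℝ => y^β) (Ioc 0 b) :=
    (intervalIntegrable_iff_integrableOn_Ioc_of_le hb0.le).mp
      (intervalIntegral.intervalIntegrable_rpow' hβ)
  calc ∫⁻ y in Icc (1:ℝ) b, ENNReal.ofReal (y^β)
      ≤ ∫⁻ y in Ioc 0 b, ENNReal.ofReal (y^β) := lintegral_mono_set hsub
    _ = ENNReal.ofReal (∫ y in Ioc 0 b, y^β) := by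
        rw [ofReal_integral_eq_lintegral_ofReal hint
          ((ae_restrict_iff' measurableSet_Ioc).2 (ae_of_all _ fun x hx =>
            Real.rpow_nonneg hx.1.le _))]
    _ ≤ ENNReal.ofReal (b^(β+1)/(β+1)) := by
        refine ENNReal.ofReal_le_ofReal ?_
        rw [← intervalIntegral.integral_of_le hb0.le, integral_rpow (Or.inl hβ),
          Real.zero_rpow (by linarith)]
        simp

lemma half_bound (α x K : ℝ) (hα0 : 0 < α) (hα2 : α ≤ 2) (hx : 0 ≤ x) (hxK : x ≤ K) :
    K^α/4 ≤ x^α + (K-x)^α := by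
  have hK : 0 ≤ K := hx.trans hxK
  have h24 : (2:ℝ)^α ≤ 4 := by
    calc (2:ℝ)^α ≤ 2^(2:ℝ) := Real.rpow_le_rpow_of_exponent_le one_le_two hα2
      _ = 4 := by
        rw [show (2:ℝ) = ((2:ℕ):ℝ) from by norm_num, Real.rpow_natCast]
        norm_num
  have key : ∀ y : ℝ, K/2 ≤ y → K^α/4 ≤ y^α := by
    intro y hy
    have hy0 : (0:ℝ) ≤ K/2 := by linarith
    calc K^α/4 ≤ K^α/(2:ℝ)^α :=
          div_le_div_of_nonneg_left (Real.rpow_nonneg hK _) (Real.rpow_pos_of_pos two_pos _) h24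
      _ = (K/2)^α := (Real.div_rpow hK (by norm_num) _).symm
      _ ≤ y^α := Real.rpow_le_rpow hy0 hy hα0.le
  rcases le_or_gt (K/2) x with h | h
  · have h1 := key x h
    have h2 : 0 ≤ (K-x)^α := Real.rpow_nonneg (by linarith) _
    linarith
  · have h1 := key (K-x) (by linarith)
    have h2 : 0 ≤ x^α := Real.rpow_nonneg hx _
    linarith

end Stmt16Aux

open Stmt16Aux

set_option maxHeartbeats 1600000 in
theorem stmt16 (α₁ α₂ : ℝ) (h2 : 0 < α₂) (h21 : α₂ ≤ α₁) (h12 : α₁ ≤ 2) (h2lt : α₂ < 2)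
    (h1gt : 1 < α₁) (hγ : 0 < 2 - 1 / α₁ - 1 / α₂) :
    ∃ C : ℝ, 0 < C ∧ ∀ k n : ℕ, 3 ≤ k → 3 ≤ n →
      (∫⁻ y₂ in Icc (1 : ℝ) ((n : ℝ) - 1), ∫⁻ y₁ in Icc (1 : ℝ) ((k : ℝ) - 1),
          ENNReal.ofReal (1 / ((((k : ℝ) - y₁) ^ α₁ + ((n : ℝ) - y₂) ^ α₂) *
            (y₁ ^ α₁ + y₂ ^ α₂)))) ≤
        ENNReal.ofReal (C * (1 / ((k : ℝ) ^ α₁ + (n : ℝ) ^ α₂)) ^ (2 - 1 / α₁ - 1 / α₂)) := by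
  have hα₁0 : 0 < α₁ := by linarith
  have hα₁1 : 0 < α₁ - 1 := by linarith
  have hne1 : α₁ ≠ 0 := ne_of_gt hα₁0
  have hne2 : α₂ ≠ 0 := ne_of_gt h2
  have hia : (1:ℝ)/2 ≤ 1/α₁ := one_div_le_one_div_of_le hα₁0 h12
  have hib : (1:ℝ)/2 < 1/α₂ := one_div_lt_one_div_of_lt h2 h2lt
  have hsum : 1 < 1/α₁ + 1/α₂ := by linarith
  set β := α₂ * (1/α₁ - 1) with hβdef
  have key : β + 1 = α₂ * (1/α₁ + 1/α₂ - 1) := by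
    rw [hβdef]; field_simp; ring
  have hβ1 : 0 < β + 1 := by
    rw [key]; exact mul_pos h2 (by linarith)
  have hβneg : -1 < β := by linarith
  set C₁ := 1 + 1/(α₁ - 1) with hC₁def
  have hC₁ : 0 < C₁ := by
    rw [hC₁def]
    have := one_div_pos.mpr hα₁1
    linarith
  refine ⟨8 * C₁ / (β + 1), div_pos (mul_pos (by norm_num) hC₁) hβ1, ?_⟩
  intro k n hk hn
  have hK3 : (3:ℝ) ≤ (k:ℝ) := by exact_mod_cast hk
  have hN3 : (3:ℝ) ≤ (n:ℝ) := by exact_mod_cast hn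
  set K := (k:ℝ) with hKdef
  set N := (n:ℝ) with hNdef
  have hK0 : 0 < K := by linarith
  have hN0 : 0 < N := by linarith
  set D := K^α₁ + N^α₂ with hDdef
  have hD0 : 0 < D := by
    rw [hDdef]
    exact add_pos (Real.rpow_pos_of_pos hK0 _) (Real.rpow_pos_of_pos hN0 _)
  have hpt : ∀ y₁ ∈ Icc (1:ℝ) (K-1), ∀ y₂ ∈ Icc (1:ℝ) (N-1),
      ENNReal.ofReal (1 / (((K - y₁)^α₁ + (N - y₂)^α₂) * (y₁^α₁ + y₂^α₂))) ≤
      ENNReal.ofReal (4/D) * (ENNReal.ofReal (1/((K - y₁)^α₁ + (N - y₂)^α₂))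
        + ENNReal.ofReal (1/(y₁^α₁ + y₂^α₂))) := by
    intro y₁ hy₁ y₂ hy₂
    set A := (K - y₁)^α₁ + (N - y₂)^α₂ with hA
    set B := y₁^α₁ + y₂^α₂ with hB
    have hy₁0 : (0:ℝ) < y₁ := by linarith [hy₁.1]
    have hKy₁ : (0:ℝ) < K - y₁ := by linarith [hy₁.2]
    have hy₂0 : (0:ℝ) < y₂ := by linarith [hy₂.1]
    have hNy₂ : (0:ℝ) < N - y₂ := by linarith [hy₂.2]
    have hA0 : 0 < A := by
      rw [hA]
      exact add_pos (Real.rpow_pos_of_pos hKy₁ _) (Real.rpow_pos_of_pos hNy₂ _)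
    have hB0 : 0 < B := by
      rw [hB]
      exact add_pos (Real.rpow_pos_of_pos hy₁0 _) (Real.rpow_pos_of_pos hy₂0 _)
    have hDAB : D ≤ 4 * (A + B) := by
      have hb1 := half_bound α₁ y₁ K hα₁0 h12 hy₁0.le (by linarith [hy₁.2])
      have hb2 := half_bound α₂ y₂ N h2 h2lt.le hy₂0.le (by linarith [hy₂.2])
      rw [hDdef, hA, hB]
      linarith
    have hreal : 1/(A*B) ≤ (4/D) * (1/A + 1/B) := by
      have hAne : A ≠ 0 := ne_of_gt hA0
      have hBne : B ≠ 0 := ne_of_gt hB0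
      have hDne : D ≠ 0 := ne_of_gt hD0
      have heq : (4/D) * (1/A + 1/B) = (4*(A+B))/(D*(A*B)) := by
        field_simp
        ring
      rw [heq, div_le_div_iff₀ (mul_pos hA0 hB0) (mul_pos hD0 (mul_pos hA0 hB0))]
      nlinarith [mul_le_mul_of_nonneg_right hDAB (le_of_lt (mul_pos hA0 hB0))]
    calc ENNReal.ofReal (1/(A*B)) ≤ ENNReal.ofReal ((4/D)*(1/A+1/B)) :=
          ENNReal.ofReal_le_ofReal hreal
      _ = _ := by
          rw [ENNReal.ofReal_mul (div_nonneg (by norm_num) hD0.le),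
            ENNReal.ofReal_add (one_div_nonneg.2 hA0.le) (one_div_nonneg.2 hB0.le)]
  have hinner : ∀ y₂ ∈ Icc (1:ℝ) (N-1),
      (∫⁻ y₁ in Icc (1:ℝ) (K-1),
        ENNReal.ofReal (1 / (((K - y₁)^α₁ + (N - y₂)^α₂) * (y₁^α₁ + y₂^α₂)))) ≤
      ENNReal.ofReal (4/D) * (ENNReal.ofReal C₁ * ENNReal.ofReal ((N-y₂)^β)
        + ENNReal.ofReal C₁ * ENNReal.ofReal (y₂^β)) := by
    intro y₂ hy₂
    have hy₂1 : (1:ℝ) ≤ y₂ := hy₂.1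
    have hNy₂1 : (1:ℝ) ≤ N - y₂ := by linarith [hy₂.2]
    have hcA : 0 < (N-y₂)^α₂ := Real.rpow_pos_of_pos (by linarith) _
    have hcB : 0 < y₂^α₂ := Real.rpow_pos_of_pos (by linarith) _
    have hIA : (∫⁻ y₁ in Icc (1:ℝ) (K-1), ENNReal.ofReal (1/((K-y₁)^α₁+(N-y₂)^α₂)))
        ≤ ENNReal.ofReal C₁ * ENNReal.ofReal ((N-y₂)^β) := by
      calc (∫⁻ y₁ in Icc (1:ℝ) (K-1), ENNReal.ofReal (1/((K-y₁)^α₁+(N-y₂)^α₂)))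
          = ∫⁻ y₁ in Icc (1:ℝ) (K-1), ENNReal.ofReal (1/(y₁^α₁+(N-y₂)^α₂)) :=
            lint_refl K (fun x => ENNReal.ofReal (1/(x^α₁+(N-y₂)^α₂)))
        _ ≤ ENNReal.ofReal (C₁ * ((N-y₂)^α₂)^(1/α₁ - 1)) := by
            have h := oneD α₁ ((N-y₂)^α₂) (K-1) h1gt hcA
            rw [← hC₁def] at h
            exact h
        _ = ENNReal.ofReal C₁ * ENNReal.ofReal ((N-y₂)^β) := by
            rw [← Real.rpow_mul (by linarith : (0:ℝ) ≤ N - y₂), ← hβdef,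
              ENNReal.ofReal_mul hC₁.le]
    have hIB : (∫⁻ y₁ in Icc (1:ℝ) (K-1), ENNReal.ofReal (1/(y₁^α₁+y₂^α₂)))
        ≤ ENNReal.ofReal C₁ * ENNReal.ofReal (y₂^β) := by
      calc (∫⁻ y₁ in Icc (1:ℝ) (K-1), ENNReal.ofReal (1/(y₁^α₁+y₂^α₂)))
          ≤ ENNReal.ofReal (C₁ * (y₂^α₂)^(1/α₁ - 1)) := by
            have h := oneD α₁ (y₂^α₂) (K-1) h1gt hcB
            rw [← hC₁def] at h
            exact h
        _ = ENNReal.ofReal C₁ * ENNReal.ofReal (y₂^β) := by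
            rw [← Real.rpow_mul (by linarith : (0:ℝ) ≤ y₂), ← hβdef,
              ENNReal.ofReal_mul hC₁.le]
    calc (∫⁻ y₁ in Icc (1:ℝ) (K-1),
          ENNReal.ofReal (1 / (((K - y₁)^α₁ + (N - y₂)^α₂) * (y₁^α₁ + y₂^α₂))))
        ≤ ∫⁻ y₁ in Icc (1:ℝ) (K-1),
            (ENNReal.ofReal (4/D) * (ENNReal.ofReal (1/((K - y₁)^α₁ + (N - y₂)^α₂))
              + ENNReal.ofReal (1/(y₁^α₁ + y₂^α₂)))) :=
          setLIntegral_mono' measurableSet_Icc (fun y₁ hy₁ => hpt y₁ hy₁ y₂ hy₂)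
      _ = ENNReal.ofReal (4/D) *
            ((∫⁻ y₁ in Icc (1:ℝ) (K-1), ENNReal.ofReal (1/((K-y₁)^α₁+(N-y₂)^α₂)))
              + ∫⁻ y₁ in Icc (1:ℝ) (K-1), ENNReal.ofReal (1/(y₁^α₁+y₂^α₂))) := by
          have hmeas : Measurable fun y₁ : ℝ =>
              ENNReal.ofReal (1/((K-y₁)^α₁+(N-y₂)^α₂)) := by fun_prop
          rw [lintegral_const_mul' _ _ ENNReal.ofReal_ne_top, lintegral_add_left hmeas]
      _ ≤ ENNReal.ofReal (4/D) * (ENNReal.ofReal C₁ * ENNReal.ofReal ((N-y₂)^β)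
            + ENNReal.ofReal C₁ * ENNReal.ofReal (y₂^β)) :=
          mul_le_mul_right (add_le_add hIA hIB) _
  have houter1 : (∫⁻ y₂ in Icc (1:ℝ) (N-1), ENNReal.ofReal ((N-y₂)^β))
      ≤ ENNReal.ofReal ((N-1)^(β+1)/(β+1)) := by
    calc (∫⁻ y₂ in Icc (1:ℝ) (N-1), ENNReal.ofReal ((N-y₂)^β))
        = ∫⁻ y₂ in Icc (1:ℝ) (N-1), ENNReal.ofReal (y₂^β) :=
          lint_refl N (fun x => ENNReal.ofReal (x^β))
      _ ≤ ENNReal.ofReal ((N-1)^(β+1)/(β+1)) := powInt β (N-1) hβneg (by linarith)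
  have houter2 : (∫⁻ y₂ in Icc (1:ℝ) (N-1), ENNReal.ofReal (y₂^β))
      ≤ ENNReal.ofReal ((N-1)^(β+1)/(β+1)) := powInt β (N-1) hβneg (by linarith)
  set M := (N-1)^(β+1)/(β+1) with hMdef
  have hM0 : 0 ≤ M := by
    rw [hMdef]
    exact div_nonneg (Real.rpow_nonneg (by linarith) _) hβ1.le
  have hMle : M ≤ N^(β+1)/(β+1) := by
    rw [hMdef]
    exact (div_le_div_iff_of_pos_right hβ1).mpr
      (Real.rpow_le_rpow (by linarith) (by linarith) hβ1.le)
  have hpow : N^(β+1) ≤ D^(1/α₁ + 1/α₂ - 1) := by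
    rw [key, Real.rpow_mul hN0.le]
    refine Real.rpow_le_rpow (Real.rpow_nonneg hN0.le _) ?_ (by linarith)
    rw [hDdef]
    exact le_add_of_nonneg_left (Real.rpow_nonneg hK0.le _)
  have hDpow : D^(1/α₁ + 1/α₂ - 1) / D = (1/D)^(2 - 1/α₁ - 1/α₂) := by
    have h1 : (1/D)^(2 - 1/α₁ - 1/α₂) = 1 / D^(2 - 1/α₁ - 1/α₂) := by
      rw [Real.div_rpow zero_le_one hD0.le, Real.one_rpow]
    rw [h1, div_eq_div_iff hD0.ne' (Real.rpow_pos_of_pos hD0 _).ne', ← Real.rpow_add hD0,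
      show (1/α₁ + 1/α₂ - 1) + (2 - 1/α₁ - 1/α₂) = 1 by ring, Real.rpow_one, one_mul]
  have hfinal : (4/D) * (C₁ * M + C₁ * M) ≤
      8 * C₁ / (β + 1) * (1/D)^(2 - 1/α₁ - 1/α₂) := by
    have h1 : M / D ≤ (N^(β+1)/(β+1)) / D := (div_le_div_iff_of_pos_right hD0).mpr hMle
    have h2 : (N^(β+1)/(β+1)) / D ≤ (D^(1/α₁ + 1/α₂ - 1)/(β+1)) / D :=
      (div_le_div_iff_of_pos_right hD0).mpr ((div_le_div_iff_of_pos_right hβ1).mpr hpow)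
    have h4 := mul_le_mul_of_nonneg_left (h1.trans h2)
      (mul_nonneg (by norm_num : (0:ℝ) ≤ 8) hC₁.le)
    calc (4/D) * (C₁ * M + C₁ * M) = 8 * C₁ * (M / D) := by ring
      _ ≤ 8 * C₁ * ((D^(1/α₁ + 1/α₂ - 1)/(β+1)) / D) := h4
      _ = 8 * C₁ / (β+1) * (D^(1/α₁ + 1/α₂ - 1) / D) := by ring
      _ = 8 * C₁ / (β + 1) * (1/D)^(2 - 1/α₁ - 1/α₂) := by rw [hDpow]
  refine le_trans (setLIntegral_mono' measurableSet_Icc hinner) ?_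
  calc (∫⁻ y₂ in Icc (1:ℝ) (N-1),
        (ENNReal.ofReal (4/D) * (ENNReal.ofReal C₁ * ENNReal.ofReal ((N-y₂)^β)
          + ENNReal.ofReal C₁ * ENNReal.ofReal (y₂^β))))
      = ENNReal.ofReal (4/D) * (ENNReal.ofReal C₁ *
          (∫⁻ y₂ in Icc (1:ℝ) (N-1), ENNReal.ofReal ((N-y₂)^β))
          + ENNReal.ofReal C₁ * (∫⁻ y₂ in Icc (1:ℝ) (N-1), ENNReal.ofReal (y₂^β))) := by
        have hmeas : Measurable fun y₂ : ℝ =>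
            ENNReal.ofReal C₁ * ENNReal.ofReal ((N-y₂)^β) := by fun_prop
        rw [lintegral_const_mul' _ _ ENNReal.ofReal_ne_top,
          lintegral_add_left hmeas,
          lintegral_const_mul' _ _ ENNReal.ofReal_ne_top,
          lintegral_const_mul' _ _ ENNReal.ofReal_ne_top]
    _ ≤ ENNReal.ofReal (4/D) * (ENNReal.ofReal C₁ * ENNReal.ofReal M
          + ENNReal.ofReal C₁ * ENNReal.ofReal M) :=
        mul_le_mul_right (add_le_add (mul_le_mul_right houter1 _)
          (mul_le_mul_right houter2 _)) _
    _ = ENNReal.ofReal ((4/D) * (C₁ * M + C₁ * M)) := by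
        rw [← ENNReal.ofReal_mul hC₁.le,
          ← ENNReal.ofReal_add (mul_nonneg hC₁.le hM0) (mul_nonneg hC₁.le hM0),
          ← ENNReal.ofReal_mul (div_nonneg (by norm_num) hD0.le)]
    _ ≤ ENNReal.ofReal (8 * C₁ / (β + 1) * (1/D)^(2 - 1/α₁ - 1/α₂)) :=
        ENNReal.ofReal_le_ofReal hfinal
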